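/- In a finite Symmetry Markov game, the optimal state-action value function is invariant under the group action: Q*(s, a) = Q*(L_g[s], K_g[a]) for all g ∈ G and all admissible state-action pairs (s, a). -/

import Mathlib

open Finset

/-- `Q` is a fixed point of the Bellman optimality operator. -/
def IsBellmanFixed {S A : Type*} [Fintype S] [Fintype A] [Nonempty A]
    (R : S → A → ℝ) (T : S → A → S → ℝ) (γ : ℝ) (Q : S → A → ℝ) : Prop :=
  ∀ s a, Q s a = R s a + γ * ∑ s', T s a s' *
    (Finset.univ.sup' Finset.univ_nonempty fun a' => Q s' a')

theorem optimal_Q_invariant {S A : Type*} [Fintype S] [Fintype A] [Nonempty A]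
    (R : S → A → ℝ) (T : S → A → S → ℝ) (γ : ℝ) (hγ : 0 ≤ γ) (hγ1 : γ < 1)
    (L : S → S) (K : A → A) (hL : Function.Bijective L) (hK : Function.Bijective K)
    (hR : ∀ s a, R s a = R (L s) (K a))
    (hT : ∀ s a s', T s a s' = T (L s) (K a) (L s'))
    (Qstar : S → A → ℝ) (hQ : IsBellmanFixed R T γ Qstar)
    (hunique : ∀ Q' : S → A → ℝ, IsBellmanFixed R T γ Q' → Q' = Qstar) :
    ∀ s a, Qstar s a = Qstar (L s) (K a) := by
  set eL : S ≃ S := Equiv.ofBijective L hL with heL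
  set eK : A ≃ A := Equiv.ofBijective K hK with heK
  have hsup : ∀ t : S,
      (Finset.univ.sup' Finset.univ_nonempty fun a' => Qstar t (K a')) =
      (Finset.univ.sup' Finset.univ_nonempty fun a' => Qstar t a') := by
    intro t
    apply le_antisymm
    · exact Finset.sup'_le _ _ fun a' _ => Finset.le_sup' _ (Finset.mem_univ (K a'))
    · refine Finset.sup'_le _ _ fun a' _ => ?_
      have := Finset.le_sup' (f := fun a' => Qstar t (K a'))
        (Finset.mem_univ (eK.symm a'))
      exact (le_of_eq (congrArg (Qstar t) (eK.apply_symm_apply a')).symm).trans this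
  have key : IsBellmanFixed R T γ (fun s a => Qstar (L s) (K a)) := by
    intro s a
    simp only
    rw [hQ (L s) (K a), ← hR]
    congr 1
    congr 1
    rw [← Equiv.sum_comp eL (fun s' => T (L s) (K a) s' *
      (Finset.univ.sup' Finset.univ_nonempty fun a' => Qstar s' a'))]
    apply Finset.sum_congr rfl
    intro t _
    have : eL t = L t := rfl
    rw [this, ← hT, hsup (L t)]
  have := hunique _ key
  intro s a
  exact (congrFun (congrFun this s) a).symm
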